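/- Let A, B be n×n positive definite complex matrices, X an n×n complex matrix, and 0 ≤ t ≤ 1. If (1-t)A⁻¹X + tXB⁻¹ ≠ 0 and (1-t)AX + tXB ≠ 0, then ‖X‖₂² · ‖(1-t)A⁻¹X + tXB⁻¹‖₂⁻¹ ≤ ‖(1-t)AX + tXB‖₂, where ‖·‖₂ denotes the Hilbert–Schmidt (Frobenius) norm. -/

import Mathlib

open Matrix ComplexOrder
open scoped MatrixOrder

/-- The Hilbert–Schmidt (Frobenius) norm of a complex matrix:
`‖M‖₂ = (Σ_{i,j} |m_{ij}|²)^{1/2}`. -/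
noncomputable def frobNorm {n : ℕ} (M : Matrix (Fin n) (Fin n) ℂ) : ℝ :=
  Real.sqrt (∑ i, ∑ j, ‖M i j‖ ^ 2)

noncomputable def toE {n : ℕ} (M : Matrix (Fin n) (Fin n) ℂ) :
    EuclideanSpace ℂ (Fin n × Fin n) :=
  (WithLp.equiv 2 _).symm fun p => M p.1 p.2

lemma norm_toE {n : ℕ} (M : Matrix (Fin n) (Fin n) ℂ) : ‖toE M‖ = frobNorm M := by
  rw [EuclideanSpace.norm_eq, frobNorm]
  congr 1
  rw [Fintype.sum_prod_type]
  simp [toE]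

lemma inner_toE {n : ℕ} (P Q : Matrix (Fin n) (Fin n) ℂ) :
    (inner ℂ (toE P) (toE Q) : ℂ) = trace (Pᴴ * Q) := by
  rw [PiLp.inner_apply, trace, Fintype.sum_prod_type]
  rw [Finset.sum_comm]
  simp [toE, diag, mul_apply, RCLike.inner_apply, mul_comm]

lemma cs_re {n : ℕ} (P Q : Matrix (Fin n) (Fin n) ℂ) :
    (trace (Pᴴ * Q)).re ≤ frobNorm P * frobNorm Q := by
  rw [← inner_toE, ← norm_toE, ← norm_toE]
  exact re_inner_le_norm (𝕜 := ℂ) (toE P) (toE Q)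

lemma trace_self_re {n : ℕ} (P : Matrix (Fin n) (Fin n) ℂ) :
    (trace (Pᴴ * P)).re = frobNorm P ^ 2 := by
  rw [← inner_toE, ← norm_toE]
  exact_mod_cast inner_self_eq_norm_sq (𝕜 := ℂ) (toE P)

lemma frob_pos {n : ℕ} {P : Matrix (Fin n) (Fin n) ℂ} (hP : P ≠ 0) : 0 < frobNorm P := by
  rw [← norm_toE, norm_pos_iff]
  intro h
  apply hP
  ext i j
  have := congrArg (fun v => v (i, j)) h
  simpa [toE] using this

theorem stmt_19 {n : ℕ} (A B X : Matrix (Fin n) (Fin n) ℂ)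
    (hA : A.PosDef) (hB : B.PosDef) (t : ℝ) (ht0 : 0 ≤ t) (ht1 : t ≤ 1)
    (h1 : ((1 - t : ℝ) : ℂ) • (A⁻¹ * X) + ((t : ℝ) : ℂ) • (X * B⁻¹) ≠ 0)
    (h2 : ((1 - t : ℝ) : ℂ) • (A * X) + ((t : ℝ) : ℂ) • (X * B) ≠ 0) :
    frobNorm X ^ 2 * (frobNorm (((1 - t : ℝ) : ℂ) • (A⁻¹ * X) + ((t : ℝ) : ℂ) • (X * B⁻¹)))⁻¹
      ≤ frobNorm (((1 - t : ℝ) : ℂ) • (A * X) + ((t : ℝ) : ℂ) • (X * B)) := by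
  have hAd : IsUnit A.det := hA.det_pos.ne'.isUnit
  have hBd : IsUnit B.det := hB.det_pos.ne'.isUnit
  -- square roots
  obtain ⟨C, hCh, hC2, hCd⟩ : ∃ C : Matrix (Fin n) (Fin n) ℂ,
      Cᴴ = C ∧ C * C = A ∧ IsUnit C.det := by
    refine ⟨CFC.sqrt A, (CFC.sqrt_nonneg A).posSemidef.isHermitian,
      CFC.sqrt_mul_sqrt_self A hA.posSemidef.nonneg, ?_⟩
    have hdet : (CFC.sqrt A).det * (CFC.sqrt A).det = A.det := by
      rw [← det_mul, CFC.sqrt_mul_sqrt_self A hA.posSemidef.nonneg]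
    exact isUnit_of_mul_isUnit_left (hdet ▸ hAd)
  obtain ⟨D, hDh, hD2, hDd⟩ : ∃ D : Matrix (Fin n) (Fin n) ℂ,
      Dᴴ = D ∧ D * D = B ∧ IsUnit D.det := by
    refine ⟨CFC.sqrt B, (CFC.sqrt_nonneg B).posSemidef.isHermitian,
      CFC.sqrt_mul_sqrt_self B hB.posSemidef.nonneg, ?_⟩
    have hdet : (CFC.sqrt B).det * (CFC.sqrt B).det = B.det := by
      rw [← det_mul, CFC.sqrt_mul_sqrt_self B hB.posSemidef.nonneg]
    exact isUnit_of_mul_isUnit_left (hdet ▸ hBd)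
  have hCih : C⁻¹ᴴ = C⁻¹ := by rw [conjTranspose_nonsing_inv, hCh]
  have hDih : D⁻¹ᴴ = D⁻¹ := by rw [conjTranspose_nonsing_inv, hDh]
  have hAinv : A⁻¹ = C⁻¹ * C⁻¹ := by rw [← hC2, Matrix.mul_inv_rev]
  have hBinv : B⁻¹ = D⁻¹ * D⁻¹ := by rw [← hD2, Matrix.mul_inv_rev]
  have hAinvh : A⁻¹ᴴ = A⁻¹ := hA.inv.isHermitian
  have hBinvh : B⁻¹ᴴ = B⁻¹ := hB.inv.isHermitian
  set c : ℂ := ((1 - t : ℝ) : ℂ) with hc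
  set s : ℂ := ((t : ℝ) : ℂ) with hs
  set L : Matrix (Fin n) (Fin n) ℂ := c • (A⁻¹ * X) + s • (X * B⁻¹) with hL
  set M : Matrix (Fin n) (Fin n) ℂ := c • (A * X) + s • (X * B) with hM
  set T : ℂ := trace (Xᴴ * X) with hT
  set T2 : ℂ := trace ((Xᴴ * A⁻¹) * (X * B)) with hT2
  set T3 : ℂ := trace ((B⁻¹ * Xᴴ) * (A * X)) with hT3
  -- the two "diagonal" traces
  have e1 : trace ((Xᴴ * A⁻¹) * (A * X)) = T := by
    rw [Matrix.mul_assoc, Matrix.nonsing_inv_mul_cancel_left A X hAd]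
  have e4 : trace ((B⁻¹ * Xᴴ) * (X * B)) = T := by
    rw [trace_mul_comm, Matrix.mul_assoc, Matrix.mul_nonsing_inv_cancel_left B Xᴴ hBd,
      trace_mul_comm]
  -- cross terms via square roots
  set U : Matrix (Fin n) (Fin n) ℂ := C⁻¹ * (X * D) with hU
  set V : Matrix (Fin n) (Fin n) ℂ := C * (X * D⁻¹) with hV
  have hUH : Uᴴ = (D * Xᴴ) * C⁻¹ := by
    rw [hU, conjTranspose_mul, conjTranspose_mul, hCih, hDh]
  have hVH : Vᴴ = (D⁻¹ * Xᴴ) * C := by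
    rw [hV, conjTranspose_mul, conjTranspose_mul, hCh, hDih]
  have hU2 : trace (Uᴴ * U) = T2 := by
    rw [hUH, hU]
    have h1' : ((D * Xᴴ) * C⁻¹) * (C⁻¹ * (X * D)) =
        D * ((Xᴴ * C⁻¹) * (C⁻¹ * (X * D))) := by simp only [Matrix.mul_assoc]
    rw [h1', trace_mul_comm]
    congr 1
    rw [hAinv]
    conv_rhs => rw [← hD2]
    simp only [Matrix.mul_assoc]
  have hV2 : trace (Vᴴ * V) = T3 := by
    rw [hVH, hV]
    have h1' : ((D⁻¹ * Xᴴ) * C) * (C * (X * D⁻¹)) =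
        D⁻¹ * ((Xᴴ * C) * (C * (X * D⁻¹))) := by simp only [Matrix.mul_assoc]
    rw [h1', trace_mul_comm]
    have h2' : ((Xᴴ * C) * (C * (X * D⁻¹))) * D⁻¹ = Xᴴ * ((A * X) * B⁻¹) := by
      conv_rhs => rw [← hC2]
      rw [hBinv]
      simp only [Matrix.mul_assoc]
    rw [h2', trace_mul_comm]
    have h3' : ((A * X) * B⁻¹) * Xᴴ = (A * X) * (B⁻¹ * Xᴴ) := by
      simp only [Matrix.mul_assoc]
    rw [h3', trace_mul_comm]
  have hUV : trace (Uᴴ * V) = T := by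
    rw [hUH, hV]
    have h1' : ((D * Xᴴ) * C⁻¹) * (C * (X * D⁻¹)) = D * (Xᴴ * (X * D⁻¹)) := by
      rw [Matrix.mul_assoc (D * Xᴴ) C⁻¹ _,
        Matrix.nonsing_inv_mul_cancel_left C (X * D⁻¹) hCd, Matrix.mul_assoc]
    rw [h1', trace_mul_comm]
    have h2' : (Xᴴ * (X * D⁻¹)) * D = Xᴴ * X := by
      rw [Matrix.mul_assoc, Matrix.nonsing_inv_mul_cancel_right D X hDd]
    rw [h2']
  -- cross inequality
  have hcross : 2 * T.re ≤ T2.re + T3.re := by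
    have e2 : T2.re = ‖toE U‖ ^ 2 := by
      rw [← hU2, ← inner_toE]
      exact inner_self_eq_norm_sq (𝕜 := ℂ) (toE U)
    have e3 : T3.re = ‖toE V‖ ^ 2 := by
      rw [← hV2, ← inner_toE]
      exact inner_self_eq_norm_sq (𝕜 := ℂ) (toE V)
    have e0 : T.re = (inner ℂ (toE U) (toE V) : ℂ).re := by rw [inner_toE, hUV]
    have hle : (inner ℂ (toE U) (toE V) : ℂ).re ≤ ‖toE U‖ * ‖toE V‖ := by
      simpa using re_inner_le_norm (𝕜 := ℂ) (toE U) (toE V)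
    nlinarith [sq_nonneg (‖toE U‖ - ‖toE V‖)]
  -- expansion of the main trace
  have hLH : Lᴴ = c • (Xᴴ * A⁻¹) + s • (B⁻¹ * Xᴴ) := by
    rw [hL]
    simp [conjTranspose_add, conjTranspose_smul, conjTranspose_mul, hAinvh, hBinvh,
      hc, hs, Complex.star_def, Complex.conj_ofReal]
  have hexp : trace (Lᴴ * M) = c * c * T + c * s * T2 + s * c * T3 + s * s * T := by
    rw [hLH, hM]
    simp only [Matrix.add_mul, Matrix.mul_add, Matrix.smul_mul, Matrix.mul_smul,
      trace_add, trace_smul, smul_smul, smul_eq_mul]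
    rw [e1, e4]
    ring
  -- real parts
  have hre : (trace (Lᴴ * M)).re =
      (1 - t) * (1 - t) * T.re + (1 - t) * t * T2.re + t * (1 - t) * T3.re
        + t * t * T.re := by
    rw [hexp]
    simp [hc, hs, ← Complex.ofReal_mul, Complex.add_re, Complex.re_ofReal_mul]
  have hTre : T.re = frobNorm X ^ 2 := trace_self_re X
  have hTnn : 0 ≤ T.re := by rw [hTre]; positivity
  have hmain : T.re ≤ (trace (Lᴴ * M)).re := by
    rw [hre]
    nlinarith [mul_le_mul_of_nonneg_left hcross
      (mul_nonneg (sub_nonneg.2 ht1) ht0)]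
  have hCS : (trace (Lᴴ * M)).re ≤ frobNorm L * frobNorm M := cs_re L M
  have hLpos : 0 < frobNorm L := frob_pos h1
  rw [← hTre]
  rw [← div_eq_mul_inv, div_le_iff₀ hLpos]
  calc T.re ≤ (trace (Lᴴ * M)).re := hmain
    _ ≤ frobNorm L * frobNorm M := hCS
    _ = frobNorm M * frobNorm L := mul_comm _ _
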